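/- (The space 𝒢′ extending the tempered distributions is a Våge space) Let p, q ∈ ℕ with p ≥ q + 1, and let f, g : ℕ → ℂ with ∑_m |f_m|² 2^{−mq} < ∞ and ∑_n |g_n|² 2^{−np} < ∞. Then ∑_n |∑_{m=0}^{n} f_m g_{n−m}|² 2^{−np} ≤ (1/(1 − 2^{−(p−q)})) · (∑_m |f_m|² 2^{−mq}) · (∑_n |g_n|² 2^{−np}). -/

import Mathlib

open scoped ENNReal

private lemma ennreal_cauchy_product (A B : ℕ → ℝ≥0∞) :
    ∑' n : ℕ, ∑ m ∈ Finset.range (n + 1), A m * B (n - m)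
      = (∑' m : ℕ, A m) * (∑' n : ℕ, B n) := by
  have h1 : ∀ n : ℕ, ∑ m ∈ Finset.range (n + 1), A m * B (n - m)
      = ∑' x : (Finset.HasAntidiagonal.antidiagonal n : Finset (ℕ × ℕ)), A x.1.1 * B x.1.2 := by
    intro n
    rw [Finset.tsum_subtype (Finset.HasAntidiagonal.antidiagonal n) (fun x : ℕ × ℕ => A x.1 * B x.2)]
    exact (Finset.Nat.sum_antidiagonal_eq_sum_range_succ_mk
      (fun x : ℕ × ℕ => A x.1 * B x.2) n).symm
  simp_rw [h1]
  calc ∑' (n : ℕ), ∑' (x : (Finset.HasAntidiagonal.antidiagonal n : Finset (ℕ × ℕ))), A x.1.1 * B x.1.2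
      = ∑' (σ : Σ n : ℕ, (Finset.HasAntidiagonal.antidiagonal n : Finset (ℕ × ℕ))), A σ.2.1.1 * B σ.2.1.2 :=
        (ENNReal.tsum_sigma' (fun σ : Σ n : ℕ, (Finset.HasAntidiagonal.antidiagonal n : Finset (ℕ × ℕ)) =>
          A σ.2.1.1 * B σ.2.1.2)).symm
    _ = ∑' x : ℕ × ℕ, A x.1 * B x.2 :=
        Finset.HasAntidiagonal.sigmaAntidiagonalEquivProd.tsum_eq (fun x : ℕ × ℕ => A x.1 * B x.2)
    _ = (∑' m : ℕ, A m) * (∑' n : ℕ, B n) := by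
        rw [ENNReal.tsum_prod']
        simp_rw [ENNReal.tsum_mul_left, ENNReal.tsum_mul_right]

private lemma vage_pointwise (p q : ℕ) (hpq : q + 1 ≤ p) (f g : ℕ → ℂ) (n : ℕ) :
    ‖∑ m ∈ Finset.range (n + 1), f m * g (n - m)‖ ^ 2 / 2 ^ (n * p)
      ≤ (1 - ((2 : ℝ) ^ (p - q))⁻¹)⁻¹ *
        ∑ m ∈ Finset.range (n + 1),
          (‖f m‖ ^ 2 / 2 ^ (m * q)) * (‖g (n - m)‖ ^ 2 / 2 ^ ((n - m) * p)) := by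
  set d : ℕ := p - q with hd
  have hd1 : 1 ≤ d := by omega
  have h2d : (2 : ℝ) ≤ 2 ^ d := by
    calc (2 : ℝ) = 2 ^ 1 := (pow_one 2).symm
    _ ≤ 2 ^ d := by apply pow_le_pow_right₀ <;> norm_num [hd1]
  have hr0 : (0 : ℝ) ≤ ((2 : ℝ) ^ d)⁻¹ := by positivity
  have hr1 : ((2 : ℝ) ^ d)⁻¹ < 1 := by
    rw [inv_lt_one_iff₀]; right; linarith
  have hC0 : (0 : ℝ) < 1 - ((2 : ℝ) ^ d)⁻¹ := by linarith
  set r : ℕ → ℝ := fun m => ‖f m‖ * ‖g (n - m)‖ with hrdef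
  set u : ℕ → ℝ := fun m => ((2 : ℝ) ^ (m * d))⁻¹ with hu
  set v : ℕ → ℝ := fun m => (2 : ℝ) ^ (m * d) * (‖f m‖ * ‖g (n - m)‖) ^ 2 with hv
  have step1 : ‖∑ m ∈ Finset.range (n + 1), f m * g (n - m)‖ ≤ ∑ m ∈ Finset.range (n + 1), r m := by
    refine (norm_sum_le _ _).trans_eq ?_
    simp [hrdef, norm_mul]
  have step2 : (∑ m ∈ Finset.range (n + 1), r m) ^ 2
      ≤ (∑ m ∈ Finset.range (n + 1), u m) * ∑ m ∈ Finset.range (n + 1), v m := by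
    refine Finset.sum_sq_le_sum_mul_sum_of_sq_eq_mul _ (fun i _ => by positivity)
      (fun i _ => by positivity) (fun i _ => ?_)
    simp only [hrdef, hu, hv]
    field_simp
  have step3 : ∑ m ∈ Finset.range (n + 1), u m ≤ (1 - ((2 : ℝ) ^ d)⁻¹)⁻¹ := by
    have : ∀ m : ℕ, u m = (((2 : ℝ) ^ d)⁻¹) ^ m := by
      intro m; simp only [hu]; rw [mul_comm m d, pow_mul, ← inv_pow]
    simp_rw [this]
    refine (Summable.sum_le_tsum _ (fun i _ => by positivity) ?_).trans_eq
      (tsum_geometric_of_lt_one hr0 hr1)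
    exact summable_geometric_of_lt_one hr0 hr1
  have hvnn : (0 : ℝ) ≤ ∑ m ∈ Finset.range (n + 1), v m :=
    Finset.sum_nonneg fun i _ => by positivity
  have hterm : ∀ m ∈ Finset.range (n + 1), v m / 2 ^ (n * p)
      = (‖f m‖ ^ 2 / 2 ^ (m * q)) * (‖g (n - m)‖ ^ 2 / 2 ^ ((n - m) * p)) := by
    intro m hm
    have hmn : m ≤ n := by simpa [Nat.lt_succ_iff] using hm
    have hexp : n * p = m * d + (m * q + (n - m) * p) := by
      have h1 : m * d + m * q = m * p := by
        rw [← Nat.mul_add, Nat.sub_add_cancel (by omega)]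
      have h2 : m * p + (n - m) * p = n * p := by
        rw [← Nat.add_mul, Nat.add_sub_cancel' hmn]
      omega
    rw [hv, hexp, pow_add, pow_add]
    have h1 : (0:ℝ) < 2 ^ (m * d) := by positivity
    have h2 : (0:ℝ) < 2 ^ (m * q) := by positivity
    have h3 : (0:ℝ) < 2 ^ ((n - m) * p) := by positivity
    field_simp
  have hS2 : ‖∑ m ∈ Finset.range (n + 1), f m * g (n - m)‖ ^ 2
      ≤ (∑ m ∈ Finset.range (n + 1), r m) ^ 2 :=
    pow_le_pow_left₀ (norm_nonneg _) step1 2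
  calc ‖∑ m ∈ Finset.range (n + 1), f m * g (n - m)‖ ^ 2 / 2 ^ (n * p)
      ≤ ((1 - ((2 : ℝ) ^ d)⁻¹)⁻¹ * ∑ m ∈ Finset.range (n + 1), v m) / 2 ^ (n * p) := by
        apply div_le_div_of_nonneg_right ?_ (by positivity)
        exact hS2.trans (step2.trans (mul_le_mul_of_nonneg_right step3 hvnn))
    _ = (1 - ((2 : ℝ) ^ d)⁻¹)⁻¹ *
        ∑ m ∈ Finset.range (n + 1),
          (‖f m‖ ^ 2 / 2 ^ (m * q)) * (‖g (n - m)‖ ^ 2 / 2 ^ ((n - m) * p)) := by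
        rw [mul_div_assoc, Finset.sum_div, Finset.sum_congr rfl hterm]


/-- (The space `𝒢′` extending the tempered distributions is a Våge space.)
For the exponential weights `a n = 2 ^ n` and `p ≥ q + 1`, the convolution satisfies
the Våge inequality with constant `∑_{k ≥ 0} 2^{-k(p-q)} = 1 / (1 - 2^{-(p-q)})`. -/
theorem G_prime_vage_inequality
    (p q : ℕ) (hpq : q + 1 ≤ p) (f g : ℕ → ℂ)
    (hf : (∑' m : ℕ, ENNReal.ofReal (‖f m‖ ^ 2 / 2 ^ (m * q))) < ⊤)
    (hg : (∑' n : ℕ, ENNReal.ofReal (‖g n‖ ^ 2 / 2 ^ (n * p))) < ⊤) :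
    (∑' n : ℕ, ENNReal.ofReal
        (‖∑ m ∈ Finset.range (n + 1), f m * g (n - m)‖ ^ 2 / 2 ^ (n * p)))
      ≤ ENNReal.ofReal ((1 - ((2 : ℝ) ^ (p - q))⁻¹)⁻¹)
          * (∑' m : ℕ, ENNReal.ofReal (‖f m‖ ^ 2 / 2 ^ (m * q)))
          * (∑' n : ℕ, ENNReal.ofReal (‖g n‖ ^ 2 / 2 ^ (n * p))) := by
  set Cr : ℝ := (1 - ((2 : ℝ) ^ (p - q))⁻¹)⁻¹ with hCr
  have hCr0 : 0 ≤ Cr := by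
    have : ((2 : ℝ) ^ (p - q))⁻¹ ≤ 1 := by
      apply inv_le_one_of_one_le₀
      exact one_le_pow₀ (by norm_num)
    exact inv_nonneg.2 (sub_nonneg.2 this)
  set A : ℕ → ℝ≥0∞ := fun m => ENNReal.ofReal (‖f m‖ ^ 2 / 2 ^ (m * q)) with hA
  set B : ℕ → ℝ≥0∞ := fun n => ENNReal.ofReal (‖g n‖ ^ 2 / 2 ^ (n * p)) with hB
  calc (∑' n : ℕ, ENNReal.ofReal
        (‖∑ m ∈ Finset.range (n + 1), f m * g (n - m)‖ ^ 2 / 2 ^ (n * p)))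
      ≤ ∑' n : ℕ, ENNReal.ofReal (Cr * ∑ m ∈ Finset.range (n + 1),
          (‖f m‖ ^ 2 / 2 ^ (m * q)) * (‖g (n - m)‖ ^ 2 / 2 ^ ((n - m) * p))) :=
        ENNReal.tsum_le_tsum fun n =>
          ENNReal.ofReal_le_ofReal (vage_pointwise p q hpq f g n)
    _ = ∑' n : ℕ, ENNReal.ofReal Cr * ∑ m ∈ Finset.range (n + 1), A m * B (n - m) := by
        refine tsum_congr fun n => ?_
        rw [ENNReal.ofReal_mul hCr0]
        congr 1
        rw [ENNReal.ofReal_sum_of_nonneg (fun i _ => by positivity)]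
        exact Finset.sum_congr rfl fun i _ =>
          ENNReal.ofReal_mul (by positivity)
    _ = ENNReal.ofReal Cr * ∑' n : ℕ, ∑ m ∈ Finset.range (n + 1), A m * B (n - m) :=
        ENNReal.tsum_mul_left
    _ = ENNReal.ofReal Cr * ((∑' m : ℕ, A m) * (∑' n : ℕ, B n)) := by
        rw [ennreal_cauchy_product]
    _ = ENNReal.ofReal Cr * (∑' m : ℕ, A m) * (∑' n : ℕ, B n) := by
        rw [mul_assoc]
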